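/- Let λ be a bilinking form between finite sets V and W under which K_V and K_W are weakly linked, with |W| ≥ 3. If C₁ and C₂ are cycles in the complete graph on V each of which links W (i.e., for each i there is a cycle D_i in W with λ(C_i,D_i) ≠ 0), then C₁ and C₂ share a common vertex. -/

import Mathlib

open scoped Classical

section Defs

variable {V : Type*} {W : Type*}

/-- A map `V³ → ℤ` alternating in its arguments. -/
def IsAlt (f : V → V → V → ℤ) : Prop :=
  (∀ a b c, f b a c = - f a b c) ∧ (∀ a b c, f a c b = - f a b c)

/-- The simplicial cocycle identity. -/
def IsCocycle (f : V → V → V → ℤ) : Prop :=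
  ∀ a b c d, f b c d - f a c d + f a b d - f a b c = 0

/-- A linking function on `V`. -/
def IsLinkingFun (f : V → V → V → ℤ) : Prop := IsAlt f ∧ IsCocycle f

/-- A cycle in the complete graph on `V`: a list of at least 3 distinct vertices. -/
def IsCycle (C : List V) : Prop := C.Nodup ∧ 3 ≤ C.length

/-- The value of `f` on a cycle, via the standard triangulation
`f(C) = ∑_{i=1}^{k-2} f(v₀, vᵢ, vᵢ₊₁)`. -/
def cycleVal (f : V → V → V → ℤ) : List V → ℤ
  | [] => 0
  | v :: rest => ∑ i ∈ Finset.range (rest.length - 1),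
      f v (rest.getD i v) (rest.getD (i + 1) v)

/-- `f` is weak: `|f(C)| ≤ 1` for every cycle `C`. -/
def IsWeak (f : V → V → V → ℤ) : Prop :=
  ∀ C : List V, IsCycle C → |cycleVal f C| ≤ 1

/-- `f` is nontrivial: `f(C) ≠ 0` for some cycle `C`. -/
def IsNontrivial (f : V → V → V → ℤ) : Prop :=
  ∃ C : List V, IsCycle C ∧ cycleVal f C ≠ 0

noncomputable def starEdge (O I : Set V) (x y : V) : ℤ :=
  (if x ∈ O ∧ y ∈ I then 1 else 0) - (if x ∈ I ∧ y ∈ O then 1 else 0)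

/-- The star function `pOI`: the alternating function with value `1` on `(p,q,r)`
for `q ∈ O`, `r ∈ I`, and value `0` on triples not of this form up to reorientation. -/
noncomputable def starFun (p : V) (O I : Set V) (a b c : V) : ℤ :=
  (if a = p then starEdge O I b c else 0)
    - (if b = p then starEdge O I a c else 0)
    + (if c = p then starEdge O I a b else 0)

/-- `({p}, O, I)` is an ordered partition of `V` into three nonempty parts. -/
def IsStarPartition (p : V) (O I : Set V) : Prop :=
  O.Nonempty ∧ I.Nonempty ∧ p ∉ O ∧ p ∉ I ∧ Disjoint O I ∧
    insert p (O ∪ I) = (Set.univ : Set V)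

/-- A bilinking form between `V` and `W`. -/
def IsBilinking (lam : V → V → V → W → W → W → ℤ) : Prop :=
  (∀ u v w, IsLinkingFun (fun a b c => lam a b c u v w)) ∧
  (∀ a b c, IsLinkingFun (lam a b c))

/-- The value of a bilinking form on a pair of cycles. -/
def biCycleVal (lam : V → V → V → W → W → W → ℤ) (C : List V) (D : List W) : ℤ :=
  cycleVal (fun a b c => cycleVal (lam a b c) D) C

/-- `K_V` and `K_W` are weakly linked under `lam`. -/
def WeaklyLinked (lam : V → V → V → W → W → W → ℤ) : Prop :=
  (∀ (C : List V) (D : List W), IsCycle C → IsCycle D → |biCycleVal lam C D| ≤ 1) ∧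
  ∃ (C : List V) (D : List W), IsCycle C ∧ IsCycle D ∧ biCycleVal lam C D ≠ 0

end Defs

section Aux
variable {V : Type*} {W : Type*}

namespace LinkAux

/-! ### simple consequences of being a linking function -/

variable {f : V → V → V → ℤ}

lemma swap12 (hf : IsLinkingFun f) (a b c : V) : f b a c = - f a b c := hf.1.1 a b c
lemma swap23 (hf : IsLinkingFun f) (a b c : V) : f a c b = - f a b c := hf.1.2 a b c
lemma cyc (hf : IsLinkingFun f) (a b c : V) : f b c a = f a b c := by
  have e1 := hf.1.1 c b a
  have e2 := hf.1.2 c a b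
  have e3 := hf.1.1 a c b
  have e4 := hf.1.2 a b c
  omega
lemma diag12 (hf : IsLinkingFun f) (a c : V) : f a a c = 0 := by
  have := swap12 hf a a c; omega
lemma diag23 (hf : IsLinkingFun f) (a b : V) : f a b b = 0 := by
  have := swap23 hf a b b; omega
lemma diag13 (hf : IsLinkingFun f) (a b : V) : f a b a = 0 := by
  have h := cyc hf a b a; have := diag23 hf b a; omega
lemma coc (hf : IsLinkingFun f) (a b c d : V) :
    f b c d - f a c d + f a b d - f a b c = 0 := hf.2 a b c d

lemma ne_of_ne_zero (hf : IsLinkingFun f) {a b c : V} (h : f a b c ≠ 0) :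
    a ≠ b ∧ a ≠ c ∧ b ≠ c := by
  refine ⟨?_, ?_, ?_⟩ <;> rintro rfl
  · exact h (diag12 hf _ _)
  · exact h (diag13 hf _ _)
  · exact h (diag23 hf _ _)

/-! ### path sums and cyclic sums -/

def pathSum (φ : V → V → ℤ) : List V → ℤ
  | a :: b :: t => φ a b + pathSum φ (b :: t)
  | _ => 0

@[simp] lemma pathSum_nil (φ : V → V → ℤ) : pathSum φ [] = 0 := rfl
@[simp] lemma pathSum_single (φ : V → V → ℤ) (a : V) : pathSum φ [a] = 0 := rfl
@[simp] lemma pathSum_cons₂ (φ : V → V → ℤ) (a b : V) (t : List V) :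
    pathSum φ (a :: b :: t) = φ a b + pathSum φ (b :: t) := rfl

def cycSum (φ : V → V → ℤ) (C : List V) : ℤ := pathSum φ (C ++ C.take 1)

@[simp] lemma cycSum_nil (φ : V → V → ℤ) : cycSum φ [] = 0 := rfl

lemma pathSum_append' (φ : V → V → ℤ) :
    ∀ (A : List V) (a b : V) (B : List V),
      pathSum φ ((a :: A) ++ (b :: B)) =
        pathSum φ (a :: A) + φ (A.getLastD a) b + pathSum φ (b :: B) := by
  intro A
  induction A with
  | nil => intro a b B; simp
  | cons x A ih =>
    intro a b B
    have := ih x b B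
    simp only [List.cons_append, pathSum_cons₂, List.getLastD_cons] at *
    omega

lemma cycSum_cons (φ : V → V → ℤ) (a : V) (A : List V) :
    cycSum φ (a :: A) = pathSum φ (a :: A) + φ (A.getLastD a) a := by
  have h := pathSum_append' φ A a a ([] : List V)
  simp only [cycSum, List.take_cons, List.take_nil]
  simpa using h

lemma pathSum_tel {φ ψ : V → V → ℤ} {g : V → ℤ}
    (h : ∀ a b, φ a b - ψ a b = g a - g b) :
    ∀ (t : List V) (a : V), pathSum φ (a :: t) - pathSum ψ (a :: t) = g a - g (t.getLastD a) := by
  intro t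
  induction t with
  | nil => intro a; simp
  | cons b t ih =>
    intro a
    have h1 := ih b
    have h2 := h a b
    simp only [pathSum_cons₂, List.getLastD_cons]
    omega

lemma cycSum_tel {φ ψ : V → V → ℤ} {g : V → ℤ}
    (h : ∀ a b, φ a b - ψ a b = g a - g b) (C : List V) :
    cycSum φ C = cycSum ψ C := by
  cases C with
  | nil => rfl
  | cons a t =>
    have h1 := pathSum_tel h (t ++ [a]) a
    rw [List.getLastD_concat] at h1
    simp only [cycSum, List.take_succ_cons, List.take_zero, List.cons_append] at *
    omega




/-! ### more cycSum lemmas -/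

lemma getLastD_append_concat (Y : List V) (d : V) (x : V) :
    ((Y ++ [d]).getLastD x) = d := List.getLastD_concat

lemma cycSum_append_shape (φ : V → V → ℤ) (a b d e : V) (T₁ T₂ : List V) :
    cycSum φ ((b :: (T₁ ++ [a])) ++ (e :: (T₂ ++ [d]))) =
      cycSum φ (b :: (T₁ ++ [a])) + cycSum φ (e :: (T₂ ++ [d]))
        + φ a e + φ d b - φ a b - φ d e := by
  have h1 := pathSum_append' φ (T₁ ++ [a]) b e (T₂ ++ [d])
  rw [List.getLastD_concat] at h1
  have h2 : cycSum φ ((b :: (T₁ ++ [a])) ++ (e :: (T₂ ++ [d]))) =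
      pathSum φ ((b :: (T₁ ++ [a])) ++ (e :: (T₂ ++ [d]))) + φ d b := by
    have h3 := cycSum_cons φ b ((T₁ ++ [a]) ++ (e :: (T₂ ++ [d])))
    have h4 : (((T₁ ++ [a]) ++ (e :: (T₂ ++ [d]))).getLastD b) = d := by
      have : ((T₁ ++ [a]) ++ (e :: (T₂ ++ [d]))) = ((T₁ ++ [a] ++ (e :: T₂)) ++ [d]) := by
        simp
      rw [this, List.getLastD_concat]
    rw [h4] at h3
    simpa using h3
  have h5 := cycSum_cons φ b (T₁ ++ [a])
  rw [List.getLastD_concat] at h5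
  have h6 := cycSum_cons φ e (T₂ ++ [d])
  rw [List.getLastD_concat] at h6
  rw [h2, h1, h5, h6]; ring

lemma getLastD_append_cons (A : List V) (b : V) (B : List V) :
    ∀ a : V, (A ++ (b :: B)).getLastD a = B.getLastD b := by
  induction A with
  | nil => intro a; rw [List.nil_append, List.getLastD_cons]
  | cons x A' ih =>
    intro a
    have : ((x :: A') ++ (b :: B)) = x :: (A' ++ (b :: B)) := by simp
    rw [this, List.getLastD_cons, ih]

lemma cycSum_swap (φ : V → V → ℤ) (A B : List V) :
    cycSum φ (A ++ B) = cycSum φ (B ++ A) := by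
  cases A with
  | nil => simp
  | cons a A' =>
    cases B with
    | nil => simp
    | cons b B' =>
      have h3 := cycSum_cons φ a (A' ++ (b :: B'))
      rw [getLastD_append_cons] at h3
      have h4 := cycSum_cons φ b (B' ++ (a :: A'))
      rw [getLastD_append_cons] at h4
      have h1 := pathSum_append' φ A' a b B'
      have h2 := pathSum_append' φ B' b a A'
      have hA := cycSum_cons φ a A'
      have hB := cycSum_cons φ b B'
      simp only [List.cons_append] at *
      omega

lemma cycSum_rotate (φ : V → V → ℤ) (C : List V) (n : ℕ) :
    cycSum φ (C.rotate n) = cycSum φ C := by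
  cases C with
  | nil => simp [List.rotate_nil]
  | cons c t =>
    have hlen : 0 < (c :: t).length := by simp
    rw [← List.rotate_mod]
    have hle : n % (c :: t).length ≤ (c :: t).length := le_of_lt (Nat.mod_lt _ hlen)
    rw [List.rotate_eq_drop_append_take hle, cycSum_swap]
    rw [List.take_append_drop]

/-- linearity etc. -/
lemma pathSum_add (φ ψ : V → V → ℤ) (L : List V) :
    pathSum (fun a b => φ a b + ψ a b) L = pathSum φ L + pathSum ψ L := by
  induction L with
  | nil => simp
  | cons a t ih =>
    cases t with
    | nil => simp
    | cons b t' => simp only [pathSum_cons₂] at *; omega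

lemma pathSum_neg (φ : V → V → ℤ) (L : List V) :
    pathSum (fun a b => -(φ a b)) L = - pathSum φ L := by
  induction L with
  | nil => simp
  | cons a t ih =>
    cases t with
    | nil => simp
    | cons b t' => simp only [pathSum_cons₂] at *; omega

lemma cycSum_add (φ ψ : V → V → ℤ) (C : List V) :
    cycSum (fun a b => φ a b + ψ a b) C = cycSum φ C + cycSum ψ C := pathSum_add _ _ _

lemma cycSum_neg (φ : V → V → ℤ) (C : List V) :
    cycSum (fun a b => -(φ a b)) C = - cycSum φ C := pathSum_neg _ _

lemma cycSum_sub (φ ψ : V → V → ℤ) (C : List V) :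
    cycSum (fun a b => φ a b - ψ a b) C = cycSum φ C - cycSum ψ C := by
  have h1 := cycSum_add φ (fun a b => -(ψ a b)) C
  have h2 := cycSum_neg ψ C
  simp only [sub_eq_add_neg]
  rw [h1, h2]

lemma pathSum_fst (g : V → ℤ) (L : List V) :
    pathSum (fun d _ => g d) L = (L.dropLast.map g).sum := by
  induction L with
  | nil => simp
  | cons a t ih =>
    cases t with
    | nil => simp
    | cons b t' =>
      simp only [pathSum_cons₂] at *
      rw [ih]
      simp [List.dropLast_cons_of_ne_nil]

lemma cycSum_fst (g : V → ℤ) (C : List V) :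
    cycSum (fun d _ => g d) C = (C.map g).sum := by
  cases C with
  | nil => simp
  | cons a t =>
    have : cycSum (fun d _ => g d) (a :: t) = pathSum (fun d _ => g d) ((a :: t) ++ [a]) := by
      simp [cycSum]
    rw [this, pathSum_fst]
    have h9 : ((a :: t) ++ [a]).dropLast = a :: t := List.dropLast_concat
    rw [h9]

lemma cycSum_const (c : ℤ) (C : List V) :
    cycSum (fun _ _ => c) C = C.length * c := by
  rw [cycSum_fst]
  induction C with
  | nil => simp
  | cons a t ih => simp [ih]; ring

lemma cycSum_list_sum (m : List W) (G : W → V → V → ℤ) (C : List V) :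
    cycSum (fun a b => (m.map (fun d => G d a b)).sum) C
      = (m.map (fun d => cycSum (G d) C)).sum := by
  induction m with
  | nil => simp [cycSum_const]
  | cons d m' ih =>
    simp only [List.map_cons, List.sum_cons]
    rw [← ih, ← cycSum_add]

/-! ### congruence over cyclic edges -/

def IsCycEdge (C : List V) (d e : V) : Prop := ∃ n T, C.rotate n = e :: (T ++ [d])

lemma pathSum_congr_adj (φ ψ : V → V → ℤ) :
    ∀ (L : List V), (∀ X Y d e, L = X ++ d :: e :: Y → φ d e = ψ d e) →
      pathSum φ L = pathSum ψ L := by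
  intro L
  induction L with
  | nil => intro _; rfl
  | cons a t ih =>
    intro h
    cases t with
    | nil => rfl
    | cons b t' =>
      have h0 : φ a b = ψ a b := h [] t' a b rfl
      have h1 : pathSum φ (b :: t') = pathSum ψ (b :: t') := by
        apply ih
        intro X Y d e hXY
        exact h (a :: X) Y d e (by rw [hXY]; rfl)
      simp only [pathSum_cons₂, h0, h1]

lemma adj_isCycEdge {C : List V} (hC : 2 ≤ C.length) (c₀ : V) (t : List V) (hc : C = c₀ :: t)
    {X Y : List V} {d e : V} (h : C ++ [c₀] = X ++ d :: e :: Y) : IsCycEdge C d e := by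
  rcases Y.eq_nil_or_concat with rfl | ⟨Y', y, rfl⟩
  · -- e is the closing copy of c₀
    have h' : C ++ [c₀] = (X ++ [d]) ++ [e] := by simpa using h
    have hC1 : C = X ++ [d] := by
      have := List.append_inj_left' h' (by simp)
      simpa using this
    have hce : c₀ = e := by
      have := List.append_inj_right' h' (by simp)
      simpa using this
    subst hce
    cases X with
    | nil => rw [hC1] at hC; simp at hC
    | cons x X' =>
      have hx : x = c₀ := by
        have h5 : c₀ :: t = x :: (X' ++ [d]) := by
          rw [← hc, hC1]; simp
        exact ((List.cons_eq_cons.mp h5).1).symm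
      refine ⟨0, X', ?_⟩
      rw [List.rotate_zero, hC1, hx]
      simp
  · -- inner edge
    have h' : C ++ [c₀] = (X ++ d :: e :: Y') ++ [y] := by simpa using h
    have h2 : C = X ++ d :: e :: Y' := by
      have := List.append_inj_left' h' (by simp)
      simpa using this
    refine ⟨X.length + 1, Y' ++ X, ?_⟩
    have hsplit : C = (X ++ [d]) ++ (e :: Y') := by simpa using h2
    have hle : X.length + 1 ≤ C.length := by
      rw [h2]; simp
    rw [List.rotate_eq_drop_append_take hle, hsplit]
    have hd : ((X ++ [d]) ++ (e :: Y')).drop (X.length + 1) = e :: Y' := by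
      have : (X ++ [d]).length = X.length + 1 := by simp
      rw [← this, List.drop_left]
    have ht : ((X ++ [d]) ++ (e :: Y')).take (X.length + 1) = X ++ [d] := by
      have : (X ++ [d]).length = X.length + 1 := by simp
      rw [← this, List.take_left]
    rw [hd, ht]
    simp

lemma cycSum_congr_edges {φ ψ : V → V → ℤ} {C : List V} (hC : 2 ≤ C.length)
    (h : ∀ d e, IsCycEdge C d e → φ d e = ψ d e) : cycSum φ C = cycSum ψ C := by
  cases C with
  | nil => simp at hC
  | cons c₀ t =>
    have : cycSum φ (c₀ :: t) = pathSum φ ((c₀ :: t) ++ [c₀]) := by simp [cycSum]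
    rw [this]
    have : cycSum ψ (c₀ :: t) = pathSum ψ ((c₀ :: t) ++ [c₀]) := by simp [cycSum]
    rw [this]
    apply pathSum_congr_adj
    intro X Y d e hXY
    exact h d e (adj_isCycEdge hC c₀ t rfl hXY)


/-! ### bridge between cycleVal and cycSum -/

lemma sum_range_getD_eq_pathSum (φ : V → V → ℤ) (d : V) :
    ∀ l : List V, (∑ i ∈ Finset.range (l.length - 1), φ (l.getD i d) (l.getD (i+1) d))
      = pathSum φ l := by
  intro l
  induction l with
  | nil => simp
  | cons a t ih =>
    cases t with
    | nil => simp
    | cons b t' =>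
      have hlen : (a :: b :: t').length - 1 = t'.length + 1 := by simp
      rw [hlen]
      rw [Finset.sum_range_succ']
      have hterm : φ ((a :: b :: t').getD 0 d) ((a :: b :: t').getD 1 d) = φ a b := by
        simp [List.getD_cons_zero, List.getD_cons_succ]
      have hshift : ∀ i, φ ((a :: b :: t').getD (i+1) d) ((a :: b :: t').getD (i+2) d)
          = φ ((b :: t').getD i d) ((b :: t').getD (i+1) d) := by
        intro i
        simp [List.getD_cons_succ]
      have hrest : (∑ i ∈ Finset.range t'.length,
            φ ((a :: b :: t').getD (i+1) d) ((a :: b :: t').getD (i+2) d))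
          = pathSum φ (b :: t') := by
        rw [Finset.sum_congr rfl (fun i _ => hshift i)]
        have h9 := ih
        have hlen2 : (b :: t').length - 1 = t'.length := by simp
        rw [hlen2] at h9
        exact h9
      rw [hterm, hrest]
      simp [pathSum_cons₂]
      ring

variable {f : V → V → V → ℤ}

lemma cycleVal_eq_cycSum (hf : IsLinkingFun f) (x : V) (C : List V) :
    cycleVal f C = cycSum (f x) C := by
  cases C with
  | nil => rfl
  | cons v rest =>
    have step1 : cycleVal f (v :: rest) = pathSum (f v) rest := by
      show (∑ i ∈ Finset.range (rest.length - 1),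
          f v (rest.getD i v) (rest.getD (i + 1) v)) = _
      exact sum_range_getD_eq_pathSum (fun x y => f v x y) v rest
    have step2 : cycSum (f v) (v :: rest) = pathSum (f v) rest := by
      rw [cycSum_cons]
      rw [diag13 hf]
      cases rest with
      | nil => simp
      | cons r rest' =>
        rw [pathSum_cons₂, diag12 hf]
        ring
    have step3 : cycSum (f v) (v :: rest) = cycSum (f x) (v :: rest) := by
      apply cycSum_tel (g := fun z => f x v z)
      intro a b
      have := coc hf x v a b
      omega
    rw [step1, ← step2, step3]

/-! ### explicit small cycle values -/

lemma cycleVal_triple (f : V → V → V → ℤ) (a b c : V) :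
    cycleVal f [a, b, c] = f a b c := by
  show (∑ i ∈ Finset.range ([b,c].length - 1), _) = _
  simp [Finset.sum_range_succ]

lemma cycleVal_quad (f : V → V → V → ℤ) (a b c d : V) :
    cycleVal f [a, b, c, d] = f a b c + f a c d := by
  show (∑ i ∈ Finset.range ([b,c,d].length - 1), _) = _
  simp [Finset.sum_range_succ]

lemma cycleVal_pent (f : V → V → V → ℤ) (a b c d e : V) :
    cycleVal f [a, b, c, d, e] = f a b c + f a c d + f a d e := by
  show (∑ i ∈ Finset.range ([b,c,d,e].length - 1), _) = _
  simp [Finset.sum_range_succ]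


lemma cycleVal_hex (f : V → V → V → ℤ) (a b c d e g : V) :
    cycleVal f [a, b, c, d, e, g] = f a b c + f a c d + f a d e + f a e g := by
  show (∑ i ∈ Finset.range ([b,c,d,e,g].length - 1), _) = _
  simp [Finset.sum_range_succ]


/-! ### cycleVal algebra -/

lemma cycleVal_add (g h : V → V → V → ℤ) (D : List V) :
    cycleVal (fun u v w => g u v w + h u v w) D = cycleVal g D + cycleVal h D := by
  cases D <;> simp [cycleVal, Finset.sum_add_distrib]

lemma cycleVal_neg (g : V → V → V → ℤ) (D : List V) :
    cycleVal (fun u v w => -(g u v w)) D = - cycleVal g D := by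
  cases D <;> simp [cycleVal]

lemma cycleVal_zero (D : List V) :
    cycleVal (fun _ _ _ => (0 : ℤ)) D = 0 := by
  cases D <;> simp [cycleVal]

lemma cycleVal_sub (g h : V → V → V → ℤ) (D : List V) :
    cycleVal (fun u v w => g u v w - h u v w) D = cycleVal g D - cycleVal h D := by
  have h1 := cycleVal_add g (fun u v w => -(h u v w)) D
  have h2 := cycleVal_neg h D
  simp only [sub_eq_add_neg]
  rw [h1, h2]

/-! ### Fubini for biCycleVal -/

lemma biCycleVal_comm {W : Type*} (lam : V → V → V → W → W → W → ℤ) (C : List V) (D : List W) :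
    cycleVal (fun a b c => cycleVal (lam a b c) D) C
      = cycleVal (fun u v w => cycleVal (fun a b c => lam a b c u v w) C) D := by
  cases C with
  | nil => cases D <;> simp [cycleVal]
  | cons v rest =>
    cases D with
    | nil => simp [cycleVal]
    | cons u rst =>
      show (∑ i ∈ Finset.range (rest.length - 1), _) = (∑ j ∈ Finset.range (rst.length - 1), _)
      simp only [cycleVal]
      exact Finset.sum_comm

/-! ### helper: sum of constant map -/

lemma list_map_const_sum {α : Type*} (m : List α) (c : ℤ) :
    (m.map (fun _ => c)).sum = (m.length : ℤ) * c := by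
  induction m with
  | nil => simp
  | cons x m ih => simp [ih]; ring

lemma nodup3 {a b c : V} (h1 : a ≠ b) (h2 : a ≠ c) (h3 : b ≠ c) :
    ([a,b,c] : List V).Nodup := by simp [h1, h2, h3]

lemma nodup4 {a b c d : V} (h1 : a ≠ b) (h2 : a ≠ c) (h3 : a ≠ d) (h4 : b ≠ c)
    (h5 : b ≠ d) (h6 : c ≠ d) : ([a,b,c,d] : List V).Nodup := by
  simp [h1, h2, h3, h4, h5, h6]

lemma nodup5 {a b c d e : V} (h1 : a ≠ b) (h2 : a ≠ c) (h3 : a ≠ d) (h4 : a ≠ e)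
    (h5 : b ≠ c) (h6 : b ≠ d) (h7 : b ≠ e) (h8 : c ≠ d) (h9 : c ≠ e) (h10 : d ≠ e) :
    ([a,b,c,d,e] : List V).Nodup := by
  simp [h1, h2, h3, h4, h5, h6, h7, h8, h9, h10]

lemma nodup6 {a b c d e f : V} (h1 : a ≠ b) (h2 : a ≠ c) (h3 : a ≠ d) (h4 : a ≠ e)
    (h5 : a ≠ f) (h6 : b ≠ c) (h7 : b ≠ d) (h8 : b ≠ e) (h9 : b ≠ f) (h10 : c ≠ d)
    (h11 : c ≠ e) (h12 : c ≠ f) (h13 : d ≠ e) (h14 : d ≠ f) (h15 : e ≠ f) :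
    ([a,b,c,d,e,f] : List V).Nodup := by
  simp [h1, h2, h3, h4, h5, h6, h7, h8, h9, h10, h11, h12, h13, h14, h15]

/-! ### Step A : two disjoint cycles cannot both have value ±1 -/

lemma stepA (F : V → V → V → ℤ) (hF : IsLinkingFun F)
    (hweak : ∀ C : List V, IsCycle C → |cycleVal F C| ≤ 1)
    (C₁ C₂ : List V) (h₁ : IsCycle C₁) (h₂ : IsCycle C₂)
    (hdisj : ∀ p, p ∈ C₁ → p ∈ C₂ → False)
    (ε : ℤ) (hε : ε = 1 ∨ ε = -1)
    (hv₁ : cycleVal F C₁ = ε) (hv₂ : cycleVal F C₂ = ε) : False := by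
  have hk3 : 3 ≤ C₁.length := h₁.2
  have hl3 : 3 ≤ C₂.length := h₂.2
  have claimQ : ∀ a b, IsCycEdge C₁ a b → ∀ d e, IsCycEdge C₂ d e →
      F a d b - F a d e = -ε := by
    rintro a b ⟨n₁, T₁, hrot₁⟩ d e ⟨n₂, T₂, hrot₂⟩
    have perm₁ : List.Perm (b :: (T₁ ++ [a])) C₁ := hrot₁ ▸ (C₁.rotate_perm n₁)
    have perm₂ : List.Perm (e :: (T₂ ++ [d])) C₂ := hrot₂ ▸ (C₂.rotate_perm n₂)
    have haC₁ : a ∈ C₁ := perm₁.mem_iff.mp (by simp)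
    have hbC₁ : b ∈ C₁ := perm₁.mem_iff.mp (by simp)
    have hdC₂ : d ∈ C₂ := perm₂.mem_iff.mp (by simp)
    have heC₂ : e ∈ C₂ := perm₂.mem_iff.mp (by simp)
    have nd₁ : (b :: (T₁ ++ [a])).Nodup := perm₁.nodup_iff.mpr h₁.1
    have nd₂ : (e :: (T₂ ++ [d])).Nodup := perm₂.nodup_iff.mpr h₂.1
    have hba : b ≠ a := by
      have h9 := (List.nodup_cons.mp nd₁).1
      intro h; apply h9; rw [h]; simp
    have hed : e ≠ d := by
      have h9 := (List.nodup_cons.mp nd₂).1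
      intro h; apply h9; rw [h]; simp
    have had : a ≠ d := fun h => hdisj a haC₁ (h ▸ hdC₂)
    have hae : a ≠ e := fun h => hdisj a haC₁ (h ▸ heC₂)
    have hbd : b ≠ d := fun h => hdisj b hbC₁ (h ▸ hdC₂)
    have hbe : b ≠ e := fun h => hdisj b hbC₁ (h ▸ heC₂)
    set A := (b :: (T₁ ++ [a])) ++ (e :: (T₂ ++ [d])) with hAdef
    have ndA : A.Nodup := by
      apply nd₁.append nd₂
      intro x hx₁ hx₂
      exact hdisj x (perm₁.mem_iff.mp hx₁) (perm₂.mem_iff.mp hx₂)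
    have lenA : A.length = C₁.length + C₂.length := by
      rw [hAdef, List.length_append, perm₁.length_eq, perm₂.length_eq]
    have hAcyc : IsCycle A := ⟨ndA, by omega⟩
    have hr₁ : cycSum (F a) (b :: (T₁ ++ [a])) = ε := by
      rw [← hrot₁, cycSum_rotate, ← cycleVal_eq_cycSum hF a C₁, hv₁]
    have hr₂ : cycSum (F a) (e :: (T₂ ++ [d])) = ε := by
      rw [← hrot₂, cycSum_rotate, ← cycleVal_eq_cycSum hF a C₂, hv₂]
    have hval : cycleVal F A = 2 * ε + (F a d b - F a d e) := by
      rw [cycleVal_eq_cycSum hF a A, hAdef, cycSum_append_shape, hr₁, hr₂,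
        diag12 hF a e, diag12 hF a b]
      ring
    have hA1 : |cycleVal F A| ≤ 1 := hweak A hAcyc
    have ndQ : ([a, e, d, b] : List V).Nodup :=
      nodup4 hae had (fun h => hba h.symm) hed hbe.symm hbd.symm
    have hQcyc : IsCycle ([a, e, d, b] : List V) := ⟨ndQ, by simp⟩
    have hQval : cycleVal F [a, e, d, b] = -(F a d e) + F a d b := by
      rw [cycleVal_quad, swap23 hF a d e]
    have hQ1 : |cycleVal F [a, e, d, b]| ≤ 1 := hweak _ hQcyc
    rw [hQval] at hQ1
    rw [hval] at hA1
    rw [abs_le] at hA1 hQ1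
    rcases hε with rfl | rfl <;> omega
  have claimM : ∀ a b, IsCycEdge C₁ a b →
      (C₂.map (fun d => F a d b)).sum = (1 - (C₂.length : ℤ)) * ε := by
    intro a b hedge
    have h2len : 2 ≤ C₂.length := by omega
    have hcong : cycSum (fun d e => F a d b - F a d e) C₂
        = cycSum (fun _ _ => -ε) C₂ :=
      cycSum_congr_edges h2len (fun d e hde => claimQ a b hedge d e hde)
    rw [cycSum_const] at hcong
    have hsub := cycSum_sub (fun d _ => F a d b) (fun d e => F a d e) C₂
    have hfst := cycSum_fst (fun d => F a d b) C₂
    have hFa : cycSum (fun d e => F a d e) C₂ = ε := by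
      have h9 : cycSum (fun d e => F a d e) C₂ = cycSum (F a) C₂ := rfl
      rw [h9, ← cycleVal_eq_cycSum hF a C₂, hv₂]
    rw [hsub, hfst, hFa] at hcong
    linear_combination hcong
  have h2len₁ : 2 ≤ C₁.length := by omega
  have htot : cycSum (fun a b => (C₂.map (fun d => F a d b)).sum) C₁
      = (C₁.length : ℤ) * ((1 - (C₂.length : ℤ)) * ε) := by
    have hcong : cycSum (fun a b => (C₂.map (fun d => F a d b)).sum) C₁
        = cycSum (fun _ _ => (1 - (C₂.length : ℤ)) * ε) C₁ :=
      cycSum_congr_edges h2len₁ (fun a b h => claimM a b h)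
    rw [hcong, cycSum_const]
  have hsum2 : cycSum (fun a b => (C₂.map (fun d => F a d b)).sum) C₁
      = (C₂.map (fun d => cycSum (fun a b => F a d b) C₁)).sum :=
    cycSum_list_sum C₂ (fun d a b => F a d b) C₁
  have hinner : ∀ d : V, cycSum (fun a b => F a d b) C₁ = -ε := by
    intro d
    have hfun : (fun (a b : V) => F a d b) = (fun a b => -(F d a b)) := by
      funext a b; exact swap12 hF d a b
    rw [hfun, cycSum_neg, ← cycleVal_eq_cycSum hF d C₁, hv₁]
  have hmap : (C₂.map (fun d => cycSum (fun a b => F a d b) C₁)).sum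
      = (C₂.length : ℤ) * (-ε) := by
    rw [List.map_congr_left (fun d _ => hinner d), list_map_const_sum]
  have key : (C₁.length : ℤ) * ((1 - (C₂.length : ℤ)) * ε) = (C₂.length : ℤ) * (-ε) := by
    rw [← htot, hsum2, hmap]
  have hk3' : (3 : ℤ) ≤ (C₁.length : ℤ) := by exact_mod_cast hk3
  have hl3' : (3 : ℤ) ≤ (C₂.length : ℤ) := by exact_mod_cast hl3
  set k : ℤ := (C₁.length : ℤ)
  set l : ℤ := (C₂.length : ℤ)
  have hkl : k * (l - 1) = l := by
    rcases hε with rfl | rfl <;> nlinarith [key]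
  nlinarith [hkl, hk3', hl3']


/-! ### Step B : two nontrivial linking functions with disjoint supports: impossible -/

lemma exists_triangle (hg : IsLinkingFun f) {D : List V} (hD : cycleVal f D ≠ 0) :
    ∃ a b c, f a b c ≠ 0 := by
  cases D with
  | nil => exact absurd rfl hD
  | cons v rest =>
    have hsum : (∑ i ∈ Finset.range (rest.length - 1),
        f v (rest.getD i v) (rest.getD (i + 1) v)) ≠ 0 := hD
    obtain ⟨i, _, hi⟩ := Finset.exists_ne_zero_of_sum_ne_zero hsum
    exact ⟨v, rest.getD i v, rest.getD (i + 1) v, hi⟩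

variable {g₁ g₂ : V → V → V → ℤ}

lemma kill (hg₁ : IsLinkingFun g₁) (hg₂ : IsLinkingFun g₂)
    (hsupp : ∀ D : List V, IsCycle D → cycleVal g₁ D = 0 ∨ cycleVal g₂ D = 0)
    {a b c : V} (hab : a ≠ b) (hac : a ≠ c) (hbc : b ≠ c)
    (hval : g₁ a b c ≠ 0) : ∀ w, g₂ a c w = 0 := by
  have htri : IsCycle ([a,b,c] : List V) := ⟨nodup3 hab hac hbc, by simp⟩
  have habc0 : g₂ a b c = 0 := by
    rcases hsupp [a,b,c] htri with h | h
    · rw [cycleVal_triple] at h; exact absurd h hval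
    · rw [cycleVal_triple] at h; exact h
  intro w
  by_cases hwa : w = a
  · subst hwa; exact diag13 hg₂ w c
  by_cases hwc : w = c
  · subst hwc; exact diag23 hg₂ a w
  by_cases hwb : w = b
  · subst hwb
    have := swap23 hg₂ a w c
    omega
  by_cases ht : g₁ a c w = 0
  · have hquad : IsCycle ([a,b,c,w] : List V) :=
      ⟨nodup4 hab hac (fun h => hwa h.symm) hbc (fun h => hwb h.symm) (fun h => hwc h.symm),
        by simp⟩
    rcases hsupp [a,b,c,w] hquad with h | h
    · rw [cycleVal_quad, ht] at h
      exact absurd (by omega : g₁ a b c = 0) hval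
    · rw [cycleVal_quad] at h
      omega
  · have htri2 : IsCycle ([a,c,w] : List V) :=
      ⟨nodup3 hac (fun h => hwa h.symm) (fun h => hwc h.symm), by simp⟩
    rcases hsupp [a,c,w] htri2 with h | h
    · rw [cycleVal_triple] at h; exact absurd h ht
    · rw [cycleVal_triple] at h; exact h

lemma killT (hg₁ : IsLinkingFun g₁) (hg₂ : IsLinkingFun g₂)
    (hsupp : ∀ D : List V, IsCycle D → cycleVal g₁ D = 0 ∨ cycleVal g₂ D = 0)
    {a b c : V} (hab : a ≠ b) (hac : a ≠ c) (hbc : b ≠ c)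
    (hval : g₁ a b c ≠ 0) :
    ∀ x ∈ ([a,b,c] : List V), ∀ y ∈ ([a,b,c] : List V), ∀ w, g₂ x y w = 0 := by
  have hv2 : g₁ b c a ≠ 0 := by rw [cyc hg₁]; exact hval
  have hv3 : g₁ c a b ≠ 0 := by rw [← cyc hg₁ c a b]; exact hval
  have z1 : ∀ w, g₂ a c w = 0 := kill hg₁ hg₂ hsupp hab hac hbc hval
  have z2 : ∀ w, g₂ b a w = 0 := kill hg₁ hg₂ hsupp hbc hab.symm hac.symm hv2
  have z3 : ∀ w, g₂ c b w = 0 := kill hg₁ hg₂ hsupp hac.symm hbc.symm hab hv3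
  have zsym : ∀ p q : V, (∀ w, g₂ p q w = 0) → ∀ w, g₂ q p w = 0 := by
    intro p q hpq w
    have h1 := swap12 hg₂ p q w
    have h2 := hpq w
    omega
  have z1' := zsym a c z1
  have z2' := zsym b a z2
  have z3' := zsym c b z3
  intro x hx y hy w
  simp only [List.mem_cons, List.not_mem_nil, or_false] at hx hy
  rcases hx with rfl | rfl | rfl <;> rcases hy with rfl | rfl | rfl <;>
    first
      | exact diag12 hg₂ _ _
      | exact z1 w
      | exact z2 w
      | exact z3 w
      | exact z1' w
      | exact z2' w
      | exact z3' w

lemma indep_third (hg : IsLinkingFun g₁) (Sl : List V)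
    (hKS : ∀ x ∈ Sl, ∀ y ∈ Sl, ∀ w, g₁ x y w = 0)
    {s s' : V} (hs : s ∈ Sl) (hs' : s' ∈ Sl) (y z : V) : g₁ y z s = g₁ y z s' := by
  have h1 := coc hg y z s s'
  have e1 := cyc hg z s s'
  have e2 := cyc hg y s s'
  have f1 := hKS s hs s' hs' z
  have f2 := hKS s hs s' hs' y
  omega

lemma indep_first (hg : IsLinkingFun g₂) (Tl : List V)
    (hKT : ∀ x ∈ Tl, ∀ y ∈ Tl, ∀ w, g₂ x y w = 0)
    {t t' : V} (ht : t ∈ Tl) (ht' : t' ∈ Tl) (y z : V) : g₂ t y z = g₂ t' y z := by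
  have h1 := coc hg t' t y z
  have f1 := hKT t' ht' t ht z
  have f2 := hKT t' ht' t ht y
  omega

lemma sharedCase (hg₁ : IsLinkingFun g₁) (hg₂ : IsLinkingFun g₂)
    (hsupp : ∀ D : List V, IsCycle D → cycleVal g₁ D = 0 ∨ cycleVal g₂ D = 0)
    (Tl Sl : List V)
    (hKT : ∀ x ∈ Tl, ∀ y ∈ Tl, ∀ w, g₂ x y w = 0)
    (hKS : ∀ x ∈ Sl, ∀ y ∈ Sl, ∀ w, g₁ x y w = 0)
    (v t₂ t₃ s₂ s₃ : V)
    (hvT : v ∈ Tl) (hvS : v ∈ Sl) (ht₂ : t₂ ∈ Tl) (ht₃ : t₃ ∈ Tl)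
    (hs₂ : s₂ ∈ Sl) (hs₃ : s₃ ∈ Sl)
    (h12 : v ≠ t₂) (h13 : v ≠ t₃) (h14 : v ≠ s₂) (h15 : v ≠ s₃)
    (h23 : t₂ ≠ t₃) (h24 : t₂ ≠ s₂) (h25 : t₂ ≠ s₃)
    (h34 : t₃ ≠ s₂) (h35 : t₃ ≠ s₃) (h45 : s₂ ≠ s₃)
    (hv1 : g₁ v t₂ t₃ ≠ 0) (hv2 : g₂ v s₂ s₃ ≠ 0) : False := by
  have hcyc : IsCycle ([v,t₂,t₃,s₂,s₃] : List V) :=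
    ⟨nodup5 h12 h13 h14 h15 h23 h24 h25 h34 h35 h45, by simp⟩
  have e1 : cycleVal g₁ [v,t₂,t₃,s₂,s₃] = g₁ v t₂ t₃ := by
    rw [cycleVal_pent]
    have z1 : g₁ v t₃ s₂ = 0 := by
      have hswap := swap23 hg₁ v s₂ t₃
      have hz := hKS v hvS s₂ hs₂ t₃
      omega
    have z2 : g₁ v s₂ s₃ = 0 := hKS v hvS s₂ hs₂ s₃
    rw [z1, z2]; ring
  have e2 : cycleVal g₂ [v,t₂,t₃,s₂,s₃] = g₂ v s₂ s₃ := by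
    rw [cycleVal_pent]
    have z1 : g₂ v t₂ t₃ = 0 := hKT v hvT t₂ ht₂ t₃
    have z2 : g₂ v t₃ s₂ = 0 := hKT v hvT t₃ ht₃ s₂
    rw [z1, z2]; ring
  rcases hsupp _ hcyc with h | h
  · rw [e1] at h; exact hv1 h
  · rw [e2] at h; exact hv2 h

lemma disjCase (hg₁ : IsLinkingFun g₁) (hg₂ : IsLinkingFun g₂)
    (hsupp : ∀ D : List V, IsCycle D → cycleVal g₁ D = 0 ∨ cycleVal g₂ D = 0)
    (a b c d e f : V)
    (hab : a ≠ b) (hac : a ≠ c) (hbc : b ≠ c)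
    (hde : d ≠ e) (hdf : d ≠ f) (hef : e ≠ f)
    (hdisj : ∀ x, x ∈ ([a,b,c] : List V) → x ∉ ([d,e,f] : List V))
    (hKT : ∀ x ∈ ([a,b,c] : List V), ∀ y ∈ ([a,b,c] : List V), ∀ w, g₂ x y w = 0)
    (hKS : ∀ x ∈ ([d,e,f] : List V), ∀ y ∈ ([d,e,f] : List V), ∀ w, g₁ x y w = 0)
    (hε : g₁ a b c ≠ 0) (hδ : g₂ d e f ≠ 0) : False := by
  have hsumT : g₁ a c d + g₁ b a d + g₁ c b d = -(g₁ a b c) := by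
    have h1 := coc hg₁ d a b c
    have h2 := cyc hg₁ d a c
    have h3 := cyc hg₁ d b a
    have h4 := swap23 hg₁ d a b
    have h5 := cyc hg₁ d c b
    have h6 := swap23 hg₁ d b c
    omega
  obtain ⟨t₁, t₂, t₃, hT1, hT2, hT3, hT12, hT13, hT23, hTval, hTr⟩ :
      ∃ t₁ t₂ t₃, t₁ ∈ ([a,b,c] : List V) ∧ t₂ ∈ ([a,b,c] : List V) ∧
        t₃ ∈ ([a,b,c] : List V) ∧ t₁ ≠ t₂ ∧ t₁ ≠ t₃ ∧ t₂ ≠ t₃ ∧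
        g₁ t₁ t₂ t₃ = g₁ a b c ∧ g₁ t₁ t₃ d ≠ -(g₁ a b c) := by
    by_cases h1 : g₁ a c d = -(g₁ a b c)
    · by_cases h2 : g₁ b a d = -(g₁ a b c)
      · refine ⟨c, a, b, by simp, by simp, by simp, hac.symm, hbc.symm, hab,
          (cyc hg₁ c a b).symm, ?_⟩
        omega
      · exact ⟨b, c, a, by simp, by simp, by simp, hbc, hab.symm, hac.symm,
          cyc hg₁ a b c, h2⟩
    · exact ⟨a, b, c, by simp, by simp, by simp, hab, hac, hbc, rfl, h1⟩
  have hsumS : g₂ a d f + g₂ a e d + g₂ a f e = -(g₂ d e f) := by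
    have h1 := coc hg₂ a d e f
    have h2 := swap23 hg₂ a e d
    have h3 := swap23 hg₂ a f e
    omega
  obtain ⟨s₁, s₂, s₃, hS1, hS2, hS3, hS12, hS13, hS23, hSval, hSr⟩ :
      ∃ s₁ s₂ s₃, s₁ ∈ ([d,e,f] : List V) ∧ s₂ ∈ ([d,e,f] : List V) ∧
        s₃ ∈ ([d,e,f] : List V) ∧ s₁ ≠ s₂ ∧ s₁ ≠ s₃ ∧ s₂ ≠ s₃ ∧
        g₂ s₁ s₂ s₃ = g₂ d e f ∧ g₂ a s₁ s₃ ≠ -(g₂ d e f) := by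
    by_cases h1 : g₂ a d f = -(g₂ d e f)
    · by_cases h2 : g₂ a e d = -(g₂ d e f)
      · refine ⟨f, d, e, by simp, by simp, by simp, hdf.symm, hef.symm, hde,
          ?_, ?_⟩
        · rw [← cyc hg₂ f d e]
        · omega
      · exact ⟨e, f, d, by simp, by simp, by simp, hef, hde.symm, hdf.symm,
          cyc hg₂ d e f, h2⟩
    · exact ⟨d, e, f, by simp, by simp, by simp, hde, hdf, hef, rfl, h1⟩
  have hcross : ∀ x y : V, x ∈ ([a,b,c] : List V) → y ∈ ([d,e,f] : List V) → x ≠ y := by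
    intro x y hx hy h
    exact hdisj x hx (h ▸ hy)
  have hcyc : IsCycle ([t₁,t₂,t₃,s₁,s₂,s₃] : List V) := by
    refine ⟨nodup6 hT12 hT13 (hcross _ _ hT1 hS1) (hcross _ _ hT1 hS2) (hcross _ _ hT1 hS3)
      hT23 (hcross _ _ hT2 hS1) (hcross _ _ hT2 hS2) (hcross _ _ hT2 hS3)
      (hcross _ _ hT3 hS1) (hcross _ _ hT3 hS2) (hcross _ _ hT3 hS3)
      hS12 hS13 hS23, by simp⟩
  have e1 : cycleVal g₁ [t₁,t₂,t₃,s₁,s₂,s₃] = g₁ a b c + g₁ t₁ t₃ d := by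
    rw [cycleVal_hex]
    have z1 : g₁ t₁ s₁ s₂ = 0 := by
      have h := cyc hg₁ t₁ s₁ s₂
      have := hKS s₁ hS1 s₂ hS2 t₁
      omega
    have z2 : g₁ t₁ s₂ s₃ = 0 := by
      have h := cyc hg₁ t₁ s₂ s₃
      have := hKS s₂ hS2 s₃ hS3 t₁
      omega
    have z3 : g₁ t₁ t₃ s₁ = g₁ t₁ t₃ d :=
      indep_third hg₁ [d,e,f] hKS hS1 (by simp) t₁ t₃
    rw [z1, z2, z3, hTval]; ring
  have e2 : cycleVal g₂ [t₁,t₂,t₃,s₁,s₂,s₃] = g₂ d e f + g₂ a s₁ s₃ := by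
    rw [cycleVal_hex]
    have z1 : g₂ t₁ t₂ t₃ = 0 := hKT t₁ hT1 t₂ hT2 t₃
    have z2 : g₂ t₁ t₃ s₁ = 0 := hKT t₁ hT1 t₃ hT3 s₁
    have h3 := coc hg₂ t₁ s₁ s₂ s₃
    have z4 : g₂ t₁ s₁ s₃ = g₂ a s₁ s₃ :=
      indep_first hg₂ [a,b,c] hKT hT1 (by simp) s₁ s₃
    rw [z1, z2]
    omega
  rcases hsupp _ hcyc with h | h
  · rw [e1] at h; exact hTr (by omega)
  · rw [e2] at h; exact hSr (by omega)


/-! ### reversal -/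

lemma pathSum_concat (φ : V → V → ℤ) (a z : V) (A : List V) :
    pathSum φ ((a :: A) ++ [z]) = pathSum φ (a :: A) + φ (A.getLastD a) z := by
  have h := pathSum_append' φ A a z ([] : List V)
  simpa using h

lemma pathSum_reverse (φ : V → V → ℤ) (hanti : ∀ a b, φ a b = -φ b a) :
    ∀ (t : List V) (a : V), pathSum φ ((a :: t).reverse) = -pathSum φ (a :: t) := by
  intro t
  induction t with
  | nil => intro a; simp
  | cons b t' ih =>
    intro a
    have h1 : (a :: b :: t').reverse = (b :: t').reverse ++ [a] := by simp
    rcases h2 : (b :: t').reverse with _ | ⟨r, R⟩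
    · exfalso
      have := congrArg List.length h2
      simp at this
    · have h3 : R.getLastD r = b := by
        have e1 : (r :: R).getLastD r = R.getLastD r := List.getLastD_cons
        have e2 : (r :: R).getLast? = some b := by
          rw [← h2, List.getLast?_reverse]
          rfl
        rw [List.getLastD_eq_getLast?, e2] at e1
        simpa using e1.symm
      have h4 : pathSum φ ((a :: b :: t').reverse) = pathSum φ (r :: R) + φ b a := by
        rw [h1, h2, pathSum_concat, h3]
      have h5 := ih b
      rw [h2] at h5
      have h6 := hanti b a
      rw [h4, h5, h6]
      simp only [pathSum_cons₂]
      ring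
  
lemma cycSum_reverse (φ : V → V → ℤ) (hanti : ∀ a b, φ a b = -φ b a) (C : List V) :
    cycSum φ C.reverse = -cycSum φ C := by
  cases C with
  | nil => simp
  | cons a t =>
    cases t with
    | nil =>
      have h0 := hanti a a
      have h1 : cycSum φ [a] = φ a a := by
        simp [cycSum, pathSum_cons₂]
      simp only [List.reverse_singleton, h1]
      omega
    | cons b t'' =>
      have hrot : ((a :: b :: t'').reverse).rotate ((b :: t'').length)
          = a :: (b :: t'').reverse := by
        have hrev : (a :: b :: t'').reverse = (b :: t'').reverse ++ [a] := by simp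
        have hlen : ((b :: t'').reverse).length = (b :: t'').length := by simp
        rw [hrev, List.rotate_eq_drop_append_take (by simp)]
        rw [← hlen, List.drop_left, List.take_left]
        simp
      have step0 : cycSum φ ((a :: b :: t'').reverse) = cycSum φ (a :: (b :: t'').reverse) := by
        rw [← hrot, cycSum_rotate]
      rw [step0, cycSum_cons]
      have hgl : ((b :: t'').reverse).getLastD a = b := by
        have e2 : ((b :: t'').reverse).getLast? = some b := by
          rw [List.getLast?_reverse]; rfl
        rw [List.getLastD_eq_getLast?, e2]
        rfl
      rw [hgl]
      have hps : pathSum φ (a :: (b :: t'').reverse) = -pathSum φ ((b :: t'') ++ [a]) := by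
        have e3 : a :: (b :: t'').reverse = ((b :: t'') ++ [a]).reverse := by simp
        have e4 : (b :: t'') ++ [a] = b :: (t'' ++ [a]) := by simp
        rw [e3, e4]
        exact pathSum_reverse φ hanti (t'' ++ [a]) b
      rw [hps]
      have e5 : pathSum φ ((b :: t'') ++ [a]) = pathSum φ (b :: t'') + φ (t''.getLastD b) a :=
        pathSum_concat φ b a t''
      have e6 : cycSum φ (a :: b :: t'') = pathSum φ (a :: b :: t'') + φ ((b :: t'').getLastD a) a :=
        cycSum_cons φ a (b :: t'')
      have e7 : (b :: t'').getLastD a = t''.getLastD b := List.getLastD_cons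
      have e8 : φ b a = -φ a b := hanti b a
      rw [e5, e6, e7, e8]
      simp only [pathSum_cons₂]
      ring

lemma cycleVal_reverse {f : V → V → V → ℤ} (hf : IsLinkingFun f) (x : V) (C : List V) :
    cycleVal f C.reverse = -cycleVal f C := by
  rw [cycleVal_eq_cycSum hf x C.reverse, cycleVal_eq_cycSum hf x C]
  exact cycSum_reverse (f x) (fun a b => by have := swap23 hf x b a; omega) C


/-! ### Step B assembly -/

lemma stepB (hg₁ : IsLinkingFun g₁) (hg₂ : IsLinkingFun g₂)
    (hnt₁ : ∃ D : List V, IsCycle D ∧ cycleVal g₁ D ≠ 0)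
    (hnt₂ : ∃ D : List V, IsCycle D ∧ cycleVal g₂ D ≠ 0)
    (hsupp : ∀ D : List V, IsCycle D → cycleVal g₁ D = 0 ∨ cycleVal g₂ D = 0) : False := by
  obtain ⟨D₁, _, hne₁⟩ := hnt₁
  obtain ⟨a, b, c, hε⟩ := exists_triangle hg₁ hne₁
  obtain ⟨hab, hac, hbc⟩ := ne_of_ne_zero hg₁ hε
  obtain ⟨D₂, _, hne₂⟩ := hnt₂
  obtain ⟨d, e, f, hδ⟩ := exists_triangle hg₂ hne₂
  obtain ⟨hde, hdf, hef⟩ := ne_of_ne_zero hg₂ hδ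
  have hsupp' : ∀ D : List V, IsCycle D → cycleVal g₂ D = 0 ∨ cycleVal g₁ D = 0 :=
    fun D hD => (hsupp D hD).symm
  have hKT : ∀ x ∈ ([a,b,c] : List V), ∀ y ∈ ([a,b,c] : List V), ∀ w, g₂ x y w = 0 :=
    killT hg₁ hg₂ hsupp hab hac hbc hε
  have hKS : ∀ x ∈ ([d,e,f] : List V), ∀ y ∈ ([d,e,f] : List V), ∀ w, g₁ x y w = 0 :=
    killT hg₂ hg₁ hsupp' hde hdf hef hδ
  have hshare : ∀ x y : V, x ∈ ([a,b,c] : List V) → y ∈ ([a,b,c] : List V) →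
      x ∈ ([d,e,f] : List V) → y ∈ ([d,e,f] : List V) → x = y := by
    intro x y hxT hyT hxS hyS
    by_contra hxy
    have hz : ∀ w, g₂ x y w = 0 := hKT x hxT y hyT
    have hz' : ∀ w, g₂ y x w = 0 := by
      intro w
      have h1 := swap12 hg₂ x y w
      have h2 := hz w
      omega
    apply hδ
    simp only [List.mem_cons, List.not_mem_nil, or_false] at hxS hyS
    have key : ∀ p q r : V, g₂ p q r ≠ 0 → (p = x ∧ q = y) ∨ (p = x ∧ r = y) ∨ (q = x ∧ r = y)
        ∨ (p = y ∧ q = x) ∨ (p = y ∧ r = x) ∨ (q = y ∧ r = x) → False := by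
      rintro p q r hpqr (⟨h1,h2⟩|⟨h1,h2⟩|⟨h1,h2⟩|⟨h1,h2⟩|⟨h1,h2⟩|⟨h1,h2⟩) <;> apply hpqr
      · rw [h1, h2]; exact hz r
      · rw [h1, h2]
        have e1 := swap23 hg₂ x y q
        have e2 := hz q
        omega
      · rw [h1, h2]
        have e1 := cyc hg₂ p x y
        have e2 := hz p
        omega
      · rw [h1, h2]; exact hz' r
      · rw [h1, h2]
        have e1 := swap23 hg₂ y x q
        have e2 := hz' q
        omega
      · rw [h1, h2]
        have e1 := cyc hg₂ p y x
        have e2 := hz' p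
        omega
    by_contra hδ'
    rcases hxS with rfl | rfl | rfl <;> rcases hyS with rfl | rfl | rfl
    · exact hxy rfl
    · exact key _ _ _ hδ' (by tauto)
    · exact key _ _ _ hδ' (by tauto)
    · exact key _ _ _ hδ' (by tauto)
    · exact hxy rfl
    · exact key _ _ _ hδ' (by tauto)
    · exact key _ _ _ hδ' (by tauto)
    · exact key _ _ _ hδ' (by tauto)
    · exact hxy rfl
  -- helper for the shared-vertex case
  have doShared : ∀ v t₂ t₃ s₂ s₃ : V,
      v ∈ ([a,b,c] : List V) → v ∈ ([d,e,f] : List V) →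
      t₂ ∈ ([a,b,c] : List V) → t₃ ∈ ([a,b,c] : List V) →
      s₂ ∈ ([d,e,f] : List V) → s₃ ∈ ([d,e,f] : List V) →
      v ≠ t₂ → v ≠ t₃ → v ≠ s₂ → v ≠ s₃ → t₂ ≠ t₃ → s₂ ≠ s₃ →
      t₂ ∉ ([d,e,f] : List V) → t₃ ∉ ([d,e,f] : List V) →
      g₁ v t₂ t₃ ≠ 0 → g₂ v s₂ s₃ ≠ 0 → False := by
    intro v t₂ t₃ s₂ s₃ hvT hvS ht₂T ht₃T hs₂S hs₃S hv2 hv3 hv4 hv5 h23 h45 ht₂S ht₃S hx1 hx2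
    exact sharedCase hg₁ hg₂ hsupp [a,b,c] [d,e,f] hKT hKS v t₂ t₃ s₂ s₃
      hvT hvS ht₂T ht₃T hs₂S hs₃S hv2 hv3 hv4 hv5 h23
      (fun h => ht₂S (h ▸ hs₂S)) (fun h => ht₂S (h ▸ hs₃S))
      (fun h => ht₃S (h ▸ hs₂S)) (fun h => ht₃S (h ▸ hs₃S)) h45 hx1 hx2
  by_cases hdT : d ∈ ([a,b,c] : List V)
  · have heT : e ∉ ([a,b,c] : List V) := fun h => hde (hshare d e hdT h (by simp) (by simp))
    have hfT : f ∉ ([a,b,c] : List V) := fun h => hdf (hshare d f hdT h (by simp) (by simp))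
    have hnotS : ∀ x, x ∈ ([a,b,c] : List V) → x ≠ d → x ∉ ([d,e,f] : List V) := by
      intro x hx hxd hxS
      simp only [List.mem_cons, List.not_mem_nil, or_false] at hxS
      rcases hxS with rfl | rfl | rfl
      · exact hxd rfl
      · exact heT hx
      · exact hfT hx
    have hdm : d = a ∨ d = b ∨ d = c := by simpa using hdT
    rcases hdm with h | h | h
    · exact doShared d b c e f hdT (by simp) (by simp) (by simp) (by simp) (by simp)
        (by rw [h]; exact hab) (by rw [h]; exact hac) hde hdf hbc hef
        (hnotS b (by simp) (by rw [h]; exact fun hh => hab hh.symm))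
        (hnotS c (by simp) (by rw [h]; exact fun hh => hac hh.symm))
        (by rw [h]; exact hε) hδ
    · refine doShared d c a e f hdT (by simp) (by simp) (by simp) (by simp) (by simp)
        (by rw [h]; exact hbc) (by rw [h]; exact fun hh => hab hh.symm) hde hdf
        (fun hh => hac hh.symm) hef
        (hnotS c (by simp) (by rw [h]; exact fun hh => hbc hh.symm))
        (hnotS a (by simp) (by rw [h]; exact hab))
        ?_ hδ
      rw [h, cyc hg₁]; exact hε
    · refine doShared d a b e f hdT (by simp) (by simp) (by simp) (by simp) (by simp)
        (by rw [h]; exact fun hh => hac hh.symm) (by rw [h]; exact fun hh => hbc hh.symm)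
        hde hdf hab hef
        (hnotS a (by simp) (by rw [h]; exact hac))
        (hnotS b (by simp) (by rw [h]; exact hbc))
        ?_ hδ
      rw [h, ← cyc hg₁ c a b]; exact hε
  · by_cases heT : e ∈ ([a,b,c] : List V)
    · have hfT : f ∉ ([a,b,c] : List V) := fun h => hef (hshare e f heT h (by simp) (by simp))
      have hnotS : ∀ x, x ∈ ([a,b,c] : List V) → x ≠ e → x ∉ ([d,e,f] : List V) := by
        intro x hx hxe hxS
        simp only [List.mem_cons, List.not_mem_nil, or_false] at hxS
        rcases hxS with rfl | rfl | rfl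
        · exact hdT hx
        · exact hxe rfl
        · exact hfT hx
      have hδ' : g₂ e f d ≠ 0 := by rw [cyc hg₂]; exact hδ
      have hem : e = a ∨ e = b ∨ e = c := by simpa using heT
      rcases hem with h | h | h
      · exact doShared e b c f d heT (by simp) (by simp) (by simp) (by simp) (by simp)
          (by rw [h]; exact hab) (by rw [h]; exact hac) hef hde.symm hbc hdf.symm
          (hnotS b (by simp) (by rw [h]; exact fun hh => hab hh.symm))
          (hnotS c (by simp) (by rw [h]; exact fun hh => hac hh.symm))
          (by rw [h]; exact hε) hδ'
      · refine doShared e c a f d heT (by simp) (by simp) (by simp) (by simp) (by simp)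
          (by rw [h]; exact hbc) (by rw [h]; exact fun hh => hab hh.symm) hef hde.symm
          (fun hh => hac hh.symm) hdf.symm
          (hnotS c (by simp) (by rw [h]; exact fun hh => hbc hh.symm))
          (hnotS a (by simp) (by rw [h]; exact hab))
          ?_ hδ'
        rw [h, cyc hg₁]; exact hε
      · refine doShared e a b f d heT (by simp) (by simp) (by simp) (by simp) (by simp)
          (by rw [h]; exact fun hh => hac hh.symm) (by rw [h]; exact fun hh => hbc hh.symm)
          hef hde.symm hab hdf.symm
          (hnotS a (by simp) (by rw [h]; exact hac))
          (hnotS b (by simp) (by rw [h]; exact hbc))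
          ?_ hδ'
        rw [h, ← cyc hg₁ c a b]; exact hε
    · by_cases hfT : f ∈ ([a,b,c] : List V)
      · have hnotS : ∀ x, x ∈ ([a,b,c] : List V) → x ≠ f → x ∉ ([d,e,f] : List V) := by
          intro x hx hxf hxS
          simp only [List.mem_cons, List.not_mem_nil, or_false] at hxS
          rcases hxS with rfl | rfl | rfl
          · exact hdT hx
          · exact heT hx
          · exact hxf rfl
        have hδ' : g₂ f d e ≠ 0 := by rw [← cyc hg₂ f d e]; exact hδ
        have hfm : f = a ∨ f = b ∨ f = c := by simpa using hfT
        rcases hfm with h | h | h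
        · exact doShared f b c d e hfT (by simp) (by simp) (by simp) (by simp) (by simp)
            (by rw [h]; exact hab) (by rw [h]; exact hac) hdf.symm hef.symm hbc hde
            (hnotS b (by simp) (by rw [h]; exact fun hh => hab hh.symm))
            (hnotS c (by simp) (by rw [h]; exact fun hh => hac hh.symm))
            (by rw [h]; exact hε) hδ'
        · refine doShared f c a d e hfT (by simp) (by simp) (by simp) (by simp) (by simp)
            (by rw [h]; exact hbc) (by rw [h]; exact fun hh => hab hh.symm) hdf.symm hef.symm
            (fun hh => hac hh.symm) hde
            (hnotS c (by simp) (by rw [h]; exact fun hh => hbc hh.symm))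
            (hnotS a (by simp) (by rw [h]; exact hab))
            ?_ hδ'
          rw [h, cyc hg₁]; exact hε
        · refine doShared f a b d e hfT (by simp) (by simp) (by simp) (by simp) (by simp)
            (by rw [h]; exact fun hh => hac hh.symm) (by rw [h]; exact fun hh => hbc hh.symm)
            hdf.symm hef.symm hab hde
            (hnotS a (by simp) (by rw [h]; exact hac))
            (hnotS b (by simp) (by rw [h]; exact hbc))
            ?_ hδ'
          rw [h, ← cyc hg₁ c a b]; exact hε
      · apply disjCase hg₁ hg₂ hsupp a b c d e f hab hac hbc hde hdf hef ?_ hKT hKS hε hδ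
        intro x hxT hxS
        simp only [List.mem_cons, List.not_mem_nil, or_false] at hxS
        rcases hxS with rfl | rfl | rfl
        · exact hdT hxT
        · exact heT hxT
        · exact hfT hxT


/-! ### bilinking glue -/

lemma FD_linking {lam : V → V → V → W → W → W → ℤ} (hbl : IsBilinking lam) (D : List W) :
    IsLinkingFun (fun a b c => cycleVal (lam a b c) D) := by
  refine ⟨⟨?_, ?_⟩, ?_⟩
  · intro a b c
    show cycleVal (lam b a c) D = -cycleVal (lam a b c) D
    have hfun : lam b a c = (fun u v w => -(lam a b c u v w)) := by
      funext u v w; exact (hbl.1 u v w).1.1 a b c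
    rw [hfun, cycleVal_neg]
  · intro a b c
    show cycleVal (lam a c b) D = -cycleVal (lam a b c) D
    have hfun : lam a c b = (fun u v w => -(lam a b c u v w)) := by
      funext u v w; exact (hbl.1 u v w).1.2 a b c
    rw [hfun, cycleVal_neg]
  · intro a b c d
    have e : (fun u v w => ((lam b c d u v w - lam a c d u v w) + lam a b d u v w)
        - lam a b c u v w) = (fun _ _ _ => (0 : ℤ)) := by
      funext u v w
      have h := (hbl.1 u v w).2 a b c d
      simp only at h
      omega
    have h2 : cycleVal (fun u v w => ((lam b c d u v w - lam a c d u v w)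
        + lam a b d u v w) - lam a b c u v w) D = 0 := by
      rw [e]; exact cycleVal_zero D
    rw [cycleVal_sub, cycleVal_add, cycleVal_sub] at h2
    show cycleVal (lam b c d) D - cycleVal (lam a c d) D + cycleVal (lam a b d) D
      - cycleVal (lam a b c) D = 0
    omega

lemma GC_linking {lam : V → V → V → W → W → W → ℤ} (hbl : IsBilinking lam) (C : List V) :
    IsLinkingFun (fun u v w => cycleVal (fun a b c => lam a b c u v w) C) := by
  refine ⟨⟨?_, ?_⟩, ?_⟩
  · intro u v w
    show cycleVal (fun a b c => lam a b c v u w) C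
      = -cycleVal (fun a b c => lam a b c u v w) C
    have hfun : (fun (a b c : V) => lam a b c v u w)
        = (fun a b c => -(lam a b c u v w)) := by
      funext a b c; exact (hbl.2 a b c).1.1 u v w
    rw [hfun, cycleVal_neg]
  · intro u v w
    show cycleVal (fun a b c => lam a b c u w v) C
      = -cycleVal (fun a b c => lam a b c u v w) C
    have hfun : (fun (a b c : V) => lam a b c u w v)
        = (fun a b c => -(lam a b c u v w)) := by
      funext a b c; exact (hbl.2 a b c).1.2 u v w
    rw [hfun, cycleVal_neg]
  · intro u v w x
    have e : (fun (a b c : V) => ((lam a b c v w x - lam a b c u w x) + lam a b c u v x)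
        - lam a b c u v w) = (fun _ _ _ => (0 : ℤ)) := by
      funext a b c
      have h := (hbl.2 a b c).2 u v w x
      omega
    have h2 : cycleVal (fun (a b c : V) => ((lam a b c v w x - lam a b c u w x)
        + lam a b c u v x) - lam a b c u v w) C = 0 := by
      rw [e]; exact cycleVal_zero C
    rw [cycleVal_sub, cycleVal_add, cycleVal_sub] at h2
    show cycleVal (fun a b c => lam a b c v w x) C - cycleVal (fun a b c => lam a b c u w x) C
      + cycleVal (fun a b c => lam a b c u v x) C - cycleVal (fun a b c => lam a b c u v w) C = 0
    omega

end LinkAux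
end Aux

open LinkAux

/-- under a weakly linked bilinking form, any two cycles of `V`
linking `W` share a vertex. -/
theorem linking_cycles_share_vertex {V : Type*} {W : Type*} [Fintype V] [Fintype W]
    (hW : 3 ≤ Fintype.card W)
    (lam : V → V → V → W → W → W → ℤ)
    (hbl : IsBilinking lam) (hwl : WeaklyLinked lam)
    (C₁ C₂ : List V) (hC₁ : IsCycle C₁) (hC₂ : IsCycle C₂)
    (hl₁ : ∃ D : List W, IsCycle D ∧ biCycleVal lam C₁ D ≠ 0)
    (hl₂ : ∃ D : List W, IsCycle D ∧ biCycleVal lam C₂ D ≠ 0) :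
    ∃ p : V, p ∈ C₁ ∧ p ∈ C₂ := by
  by_contra hcon
  push_neg at hcon
  obtain ⟨E₁, hE₁cyc, hE₁⟩ := hl₁
  obtain ⟨E₂, hE₂cyc, hE₂⟩ := hl₂
  have hbi1 : ∀ D : List W, biCycleVal lam C₁ D
      = cycleVal (fun u v w => cycleVal (fun a b c => lam a b c u v w) C₁) D :=
    fun D => biCycleVal_comm lam C₁ D
  have hbi2 : ∀ D : List W, biCycleVal lam C₂ D
      = cycleVal (fun u v w => cycleVal (fun a b c => lam a b c u v w) C₂) D :=
    fun D => biCycleVal_comm lam C₂ D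
  have hgl1 := GC_linking hbl C₁
  have hgl2 := GC_linking hbl C₂
  have hnt1 : ∃ D : List W, IsCycle D ∧
      cycleVal (fun u v w => cycleVal (fun a b c => lam a b c u v w) C₁) D ≠ 0 :=
    ⟨E₁, hE₁cyc, by rw [← hbi1]; exact hE₁⟩
  have hnt2 : ∃ D : List W, IsCycle D ∧
      cycleVal (fun u v w => cycleVal (fun a b c => lam a b c u v w) C₂) D ≠ 0 :=
    ⟨E₂, hE₂cyc, by rw [← hbi2]; exact hE₂⟩
  have hxV : ∃ x : V, True := by
    cases C₁ with
    | nil => exact absurd hC₁.2 (by simp)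
    | cons v _ => exact ⟨v, trivial⟩
  obtain ⟨x, -⟩ := hxV
  have hsupp : ∀ D : List W, IsCycle D →
      cycleVal (fun u v w => cycleVal (fun a b c => lam a b c u v w) C₁) D = 0 ∨
      cycleVal (fun u v w => cycleVal (fun a b c => lam a b c u v w) C₂) D = 0 := by
    intro D hD
    by_contra hboth
    push_neg at hboth
    obtain ⟨hb1, hb2⟩ := hboth
    have hFl : IsLinkingFun (fun a b c => cycleVal (lam a b c) D) := FD_linking hbl D
    have hFweak : ∀ C : List V, IsCycle C →
        |cycleVal (fun a b c => cycleVal (lam a b c) D) C| ≤ 1 := by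
      intro C hC
      have h0 : cycleVal (fun a b c => cycleVal (lam a b c) D) C = biCycleVal lam C D := rfl
      rw [h0]
      exact hwl.1 C D hC hD
    have hv1 : cycleVal (fun a b c => cycleVal (lam a b c) D) C₁
        = cycleVal (fun u v w => cycleVal (fun a b c => lam a b c u v w) C₁) D := by
      have h0 : cycleVal (fun a b c => cycleVal (lam a b c) D) C₁ = biCycleVal lam C₁ D := rfl
      rw [h0, hbi1]
    have hv2 : cycleVal (fun a b c => cycleVal (lam a b c) D) C₂
        = cycleVal (fun u v w => cycleVal (fun a b c => lam a b c u v w) C₂) D := by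
      have h0 : cycleVal (fun a b c => cycleVal (lam a b c) D) C₂ = biCycleVal lam C₂ D := rfl
      rw [h0, hbi2]
    have ha1 : |cycleVal (fun a b c => cycleVal (lam a b c) D) C₁| ≤ 1 := hFweak C₁ hC₁
    have ha2 : |cycleVal (fun a b c => cycleVal (lam a b c) D) C₂| ≤ 1 := hFweak C₂ hC₂
    rw [abs_le] at ha1 ha2
    have hne1 : cycleVal (fun a b c => cycleVal (lam a b c) D) C₁ ≠ 0 := by
      rw [hv1]; exact hb1
    have hne2 : cycleVal (fun a b c => cycleVal (lam a b c) D) C₂ ≠ 0 := by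
      rw [hv2]; exact hb2
    have hdisj : ∀ p, p ∈ C₁ → p ∈ C₂ → False := fun p h1 h2 => hcon p h1 h2
    by_cases hsame : cycleVal (fun a b c => cycleVal (lam a b c) D) C₁
        = cycleVal (fun a b c => cycleVal (lam a b c) D) C₂
    · exact stepA _ hFl hFweak C₁ C₂ hC₁ hC₂ hdisj
        (cycleVal (fun a b c => cycleVal (lam a b c) D) C₁) (by omega) rfl hsame.symm
    · have hC₂r : IsCycle C₂.reverse := ⟨List.nodup_reverse.mpr hC₂.1, by
        have := hC₂.2; simpa using this⟩
      have hrev : cycleVal (fun a b c => cycleVal (lam a b c) D) C₂.reverse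
          = -cycleVal (fun a b c => cycleVal (lam a b c) D) C₂ := cycleVal_reverse hFl x C₂
      have hdisj' : ∀ p, p ∈ C₁ → p ∈ C₂.reverse → False :=
        fun p h1 h2 => hcon p h1 (List.mem_reverse.mp h2)
      apply stepA _ hFl hFweak C₁ C₂.reverse hC₁ hC₂r hdisj'
        (cycleVal (fun a b c => cycleVal (lam a b c) D) C₁) (by omega) rfl ?_
      rw [hrev]
      omega
  exact stepB hgl1 hgl2 hnt1 hnt2 hsupp
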